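/- Let M be a nonnegative real n×n matrix. Then there exists a vector v with all entries strictly positive such that M v ≥ v entrywise if and only if no permutation of the indices puts M in block lower-triangular form ((M11, 0), (M21, M22)) where the spectral radius of the square block M11 is strictly less than 1. (In particular, if there exists such a positive vector v with M v ≥ v, then the spectral radius of M is at least 1.) -/

import Mathlib

open Filter Matrix
open scoped ENNReal NNReal

attribute [local instance] Matrix.linftyOpNormedRing Matrix.linftyOpNormedAlgebra

namespace SimpleObstructionAux

variable {m : Type*} [Fintype m] [DecidableEq m]

lemma mulVec_mono (A : Matrix m m ℝ) (hA : ∀ i j, 0 ≤ A i j) {u v : m → ℝ}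
    (h : ∀ i, u i ≤ v i) (i : m) : A.mulVec u i ≤ A.mulVec v i := by
  simp only [Matrix.mulVec, dotProduct]
  exact Finset.sum_le_sum fun j _ => mul_le_mul_of_nonneg_left (h j) (hA i j)

lemma pow_entry_nonneg (A : Matrix m m ℝ) (hA : ∀ i j, 0 ≤ A i j) :
    ∀ k, ∀ i j, 0 ≤ (A ^ k) i j := by
  intro k
  induction k with
  | zero =>
      intro i j
      simp only [pow_zero, Matrix.one_apply]
      split <;> norm_num
  | succ k ih =>
      intro i j
      rw [pow_succ, Matrix.mul_apply]
      exact Finset.sum_nonneg fun l _ => mul_nonneg (ih i l) (hA l j)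

lemma le_pow_mulVec (A : Matrix m m ℝ) (hA : ∀ i j, 0 ≤ A i j) {v : m → ℝ}
    (hle : ∀ i, v i ≤ A.mulVec v i) : ∀ k i, v i ≤ (A ^ k).mulVec v i := by
  intro k
  induction k with
  | zero => intro i; simp [Matrix.one_mulVec]
  | succ k ih =>
      intro i
      rw [pow_succ', ← Matrix.mulVec_mulVec]
      exact le_trans (hle i) (mulVec_mono A hA ih i)

lemma key_forward [Nonempty m] (A : Matrix m m ℝ) (hA : ∀ i j, 0 ≤ A i j)
    (B : Matrix m m ℂ) (hB : ∀ i j, B i j = (A i j : ℂ))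
    (v : m → ℝ) (hv : ∀ i, 0 < v i) (hle : ∀ i, v i ≤ A.mulVec v i) :
    ∃ μ ∈ spectrum ℂ B, 1 ≤ ‖μ‖ := by
  by_contra hcon
  push_neg at hcon
  have hρ : spectralRadius ℂ B < 1 := by
    have := spectrum.spectralRadius_lt_of_forall_lt (a := B) (r := 1) ?_
    · simpa using this
    · intro z hz
      have h := hcon z hz
      exact_mod_cast h
  have hBpow : ∀ k, ∀ i j, (B ^ k) i j = ((A ^ k) i j : ℂ) := by
    intro k
    induction k with
    | zero =>
        intro i j
        simp only [pow_zero, Matrix.one_apply]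
        split <;> simp
    | succ k ih =>
        intro i j
        rw [pow_succ, pow_succ, Matrix.mul_apply, Matrix.mul_apply]
        push_cast
        exact Finset.sum_congr rfl fun l _ => by rw [ih i l, hB l j]
  obtain ⟨i0⟩ := ‹Nonempty m›
  set vmax : ℝ := Finset.univ.sup' Finset.univ_nonempty v with hvmax
  have hvle' : ∀ j, v j ≤ vmax := fun j => Finset.le_sup' v (Finset.mem_univ j)
  have hvmax_pos : 0 < vmax := lt_of_lt_of_le (hv i0) (hvle' i0)
  set c : ℝ≥0 := ⟨v i0 / vmax, le_of_lt (div_pos (hv i0) hvmax_pos)⟩ with hc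
  have hc0 : (0 : ℝ≥0) < c := div_pos (hv i0) hvmax_pos
  have hnorm : ∀ k, c ≤ ‖B ^ k‖₊ := by
    intro k
    rw [Matrix.linfty_opNNNorm_def]
    refine le_trans ?_ (Finset.le_sup (Finset.mem_univ i0))
    rw [← NNReal.coe_le_coe, NNReal.coe_sum]
    have hsum : ∀ j, ((‖(B ^ k) i0 j‖₊ : ℝ)) = (A ^ k) i0 j := by
      intro j
      rw [coe_nnnorm, hBpow k i0 j, Complex.norm_real, Real.norm_eq_abs,
        abs_of_nonneg (pow_entry_nonneg A hA k i0 j)]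
    show v i0 / vmax ≤ _
    rw [div_le_iff₀ hvmax_pos]
    calc v i0 ≤ (A ^ k).mulVec v i0 := le_pow_mulVec A hA hle k i0
      _ = ∑ j, (A ^ k) i0 j * v j := by simp [Matrix.mulVec, dotProduct]
      _ ≤ ∑ j, (A ^ k) i0 j * vmax := by
          exact Finset.sum_le_sum fun j _ =>
            mul_le_mul_of_nonneg_left (hvle' j) (pow_entry_nonneg A hA k i0 j)
      _ = (∑ j, (A ^ k) i0 j) * vmax := by rw [Finset.sum_mul]
      _ = (∑ j, ((‖(B ^ k) i0 j‖₊ : ℝ))) * vmax := by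
          congr 1
          exact (Finset.sum_congr rfl fun j _ => (hsum j)).symm
  obtain ⟨r, hr1, hr2⟩ := exists_between hρ
  have hev1 : ∀ᶠ k : ℕ in atTop, (‖B ^ k‖₊ : ℝ≥0∞) ^ (1 / (k : ℝ)) < r :=
    (spectrum.pow_nnnorm_pow_one_div_tendsto_nhds_spectralRadius B).eventually_lt_const hr1
  have hev2 : ∀ᶠ k : ℕ in atTop, r ^ k < (c : ℝ≥0∞) :=
    (ENNReal.tendsto_pow_atTop_nhds_zero_of_lt_one hr2).eventually_lt_const
      (by exact_mod_cast hc0)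
  obtain ⟨k, hk⟩ := ((hev1.and hev2).and (eventually_ge_atTop 1)).exists
  obtain ⟨⟨hk1, hk2⟩, hk3⟩ := hk
  have hkne : (k : ℝ) ≠ 0 := Nat.cast_ne_zero.mpr (by omega)
  have hx : (‖B ^ k‖₊ : ℝ≥0∞) < r ^ k := by
    have h1 : ((‖B ^ k‖₊ : ℝ≥0∞) ^ (1 / (k : ℝ))) ^ k < r ^ k :=
      ENNReal.pow_lt_pow_left (by omega) hk1
    calc (‖B ^ k‖₊ : ℝ≥0∞) = ((‖B ^ k‖₊ : ℝ≥0∞) ^ (1 / (k : ℝ))) ^ k := by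
          rw [← ENNReal.rpow_natCast (_ ^ (1 / (k : ℝ))) k, ← ENNReal.rpow_mul,
            one_div_mul_cancel hkne, ENNReal.rpow_one]
      _ < r ^ k := h1
  have hcle : (c : ℝ≥0∞) ≤ (‖B ^ k‖₊ : ℝ≥0∞) := ENNReal.coe_le_coe.mpr (hnorm k)
  exact absurd (hcle.trans_lt (hx.trans hk2)) (lt_irrefl _)

lemma key_reverse (A : Matrix m m ℝ) (hA : ∀ i j, 0 ≤ A i j)
    (B : Matrix m m ℂ) (hB : ∀ i j, B i j = (A i j : ℂ))
    (μ : ℂ) (hμ : μ ∈ spectrum ℂ B) (h1 : 1 ≤ ‖μ‖) :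
    ∃ u : m → ℝ, (∀ i, 0 ≤ u i) ∧ (∃ i, u i ≠ 0) ∧ ∀ i, u i ≤ A.mulVec u i := by
  have hμ' : μ ∈ spectrum ℂ (Matrix.toLinAlgEquiv' B) := by
    rwa [AlgEquiv.spectrum_eq]
  have hev : Module.End.HasEigenvalue (Matrix.toLinAlgEquiv' B) μ :=
    Module.End.hasEigenvalue_iff_mem_spectrum.mpr hμ'
  obtain ⟨w, hw⟩ := hev.exists_hasEigenvector
  have hwne : w ≠ 0 := (Module.End.hasEigenvector_iff.mp hw).2
  have hweq : B.mulVec w = μ • w := by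
    have h := hw.apply_eq_smul
    rwa [Matrix.toLinAlgEquiv'_apply] at h
  refine ⟨fun i => ‖w i‖, fun i => norm_nonneg _, ?_, ?_⟩
  · obtain ⟨i, hi⟩ := Function.ne_iff.mp hwne
    exact ⟨i, fun h => hi (by simpa using norm_eq_zero.mp h)⟩
  · intro i
    have step1 : ‖w i‖ ≤ ‖μ * w i‖ := by
      rw [norm_mul]
      nlinarith [norm_nonneg (w i), norm_nonneg μ]
    have step2 : μ * w i = B.mulVec w i := by
      rw [hweq]; simp
    have step3 : ‖B.mulVec w i‖ ≤
        A.mulVec (fun j => ‖w j‖) i := by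
      simp only [Matrix.mulVec, dotProduct]
      refine le_trans (norm_sum_le _ _) ?_
      refine le_of_eq (Finset.sum_congr rfl fun j _ => ?_)
      rw [hB, norm_mul, Complex.norm_real, Real.norm_eq_abs, abs_of_nonneg (hA i j)]
    calc ‖w i‖ ≤ ‖μ * w i‖ := step1
      _ = ‖B.mulVec w i‖ := by rw [step2]
      _ ≤ A.mulVec (fun j => ‖w j‖) i := step3

end SimpleObstructionAux

/-- A nonnegative real `n × n` matrix `M` admits a strictly positive vector `v`
with `M v ≥ v` entrywise if and only if no permutation of the indices puts `M`
in block lower-triangular form with a leading square block all of whose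
eigenvalues have absolute value (spectral radius) strictly less than `1`.
The block decomposition is encoded by a nonempty set `S` of indices with
`M i j = 0` whenever `i ∈ S` and `j ∉ S`. -/
theorem simple_obstruction_positive_vector_iff
    (n : ℕ) (M : Matrix (Fin n) (Fin n) ℝ) (hM : ∀ i j, 0 ≤ M i j) :
    (∃ v : Fin n → ℝ, (∀ i, 0 < v i) ∧ ∀ i, v i ≤ M.mulVec v i) ↔
      ¬ ∃ S : Finset (Fin n), S.Nonempty ∧
        (∀ i ∈ S, ∀ j ∉ S, M i j = 0) ∧
        (∀ μ ∈ spectrum ℂ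
            (Matrix.of fun i j : {x // x ∈ S} => (M i.1 j.1 : ℂ)),
          ‖μ‖ < 1) := by
  classical
  constructor
  · rintro ⟨v, hv, hvle⟩ ⟨S, hSne, hclosed, hspec⟩
    haveI : Nonempty {x // x ∈ S} := ⟨⟨hSne.choose, hSne.choose_spec⟩⟩
    set A : Matrix {x // x ∈ S} {x // x ∈ S} ℝ :=
      Matrix.of (fun i j : {x // x ∈ S} => M i.1 j.1) with hAdef
    have hA : ∀ i j, 0 ≤ A i j := fun i j => hM i.1 j.1
    have hule : ∀ i : {x // x ∈ S}, v i.1 ≤ A.mulVec (fun j => v j.1) i := by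
      intro i
      have hsum : M.mulVec v i.1 = ∑ j ∈ S, M i.1 j * v j := by
        symm
        apply Finset.sum_subset (Finset.subset_univ S)
        intro j _ hj
        rw [hclosed i.1 i.2 j hj, zero_mul]
      have hsub : (∑ j ∈ S, M i.1 j * v j) = A.mulVec (fun j => v j.1) i := by
        rw [← Finset.sum_coe_sort S (fun j => M i.1 j * v j)]
        simp [Matrix.mulVec, dotProduct, hAdef]
      calc v i.1 ≤ M.mulVec v i.1 := hvle i.1
        _ = _ := by rw [hsum, hsub]
    obtain ⟨μ, hμ, h1⟩ := SimpleObstructionAux.key_forward A hA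
      (Matrix.of fun i j : {x // x ∈ S} => (M i.1 j.1 : ℂ)) (fun i j => rfl)
      (fun i => v i.1) (fun i => hv i.1) hule
    exact absurd (hspec μ hμ) (not_lt.mpr h1)
  · intro hno
    by_contra hv
    apply hno
    set C : (Fin n → ℝ) → Prop :=
      fun x => (∀ i, 0 ≤ x i) ∧ ∀ i, x i ≤ M.mulVec x i with hC
    set Z : Finset (Fin n) := Finset.univ.filter (fun i => ∃ x, C x ∧ 0 < x i) with hZ
    have hZmem : ∀ x, C x → ∀ i, 0 < x i → i ∈ Z := by
      intro x hx i hi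
      rw [hZ, Finset.mem_filter]
      exact ⟨Finset.mem_univ i, x, hx, hi⟩
    have hsum : ∀ T : Finset (Fin n), (∀ a ∈ T, ∃ y, C y ∧ 0 < y a) →
        ∃ x, C x ∧ ∀ i ∈ T, 0 < x i := by
      intro T
      induction T using Finset.induction_on with
      | empty =>
          intro _
          refine ⟨0, ⟨fun i => le_refl _, fun i => ?_⟩, by simp⟩
          simp [Matrix.mulVec_zero]
      | @insert a T ha ih =>
          intro hprem
          obtain ⟨x, hxC, hxpos⟩ := ih (fun b hb => hprem b (Finset.mem_insert_of_mem hb))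
          obtain ⟨y, hyC, hya⟩ := hprem a (Finset.mem_insert_self a T)
          refine ⟨x + y, ⟨fun i => add_nonneg (hxC.1 i) (hyC.1 i), fun i => ?_⟩, ?_⟩
          · have h : M.mulVec (x + y) i = M.mulVec x i + M.mulVec y i := by
              rw [Matrix.mulVec_add]; rfl
            rw [h]
            exact add_le_add (hxC.2 i) (hyC.2 i)
          · intro i hi
            rcases Finset.mem_insert.mp hi with h | h
            · subst h
              exact add_pos_of_nonneg_of_pos (hxC.1 i) hya
            · exact add_pos_of_pos_of_nonneg (hxpos i h) (hyC.1 i)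
    obtain ⟨xs, hxsC, hxspos⟩ := hsum Z (fun a ha => (Finset.mem_filter.mp ha).2)
    by_cases hZu : Z = Finset.univ
    · exact absurd ⟨xs, fun i => hxspos i (hZu ▸ Finset.mem_univ i), hxsC.2⟩ hv
    · obtain ⟨i1, hi1⟩ : ∃ i, i ∉ Z := by
        by_contra h
        push_neg at h
        exact hZu (Finset.eq_univ_iff_forall.mpr h)
      refine ⟨Zᶜ, ⟨i1, Finset.mem_compl.mpr hi1⟩, ?_, ?_⟩
      · intro i hi j hj
        by_contra hMij
        have hMij' : 0 < M i j := lt_of_le_of_ne (hM i j) (Ne.symm hMij)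
        have hjZ : j ∈ Z := by
          by_contra h; exact hj (Finset.mem_compl.mpr h)
        have hiZ : i ∉ Z := Finset.mem_compl.mp hi
        have hxsi : xs i = 0 := by
          by_contra h
          exact hiZ (hZmem xs hxsC i (lt_of_le_of_ne (hxsC.1 i) (Ne.symm h)))
        set ε : ℝ := M i j * xs j with hε
        have hεpos : 0 < ε := mul_pos hMij' (hxspos j hjZ)
        set y : Fin n → ℝ := fun k => xs k + if k = i then ε else 0 with hy
        have hmv : ∀ k, M.mulVec y k = M.mulVec xs k + M k i * ε := by
          intro k
          simp only [Matrix.mulVec, dotProduct, hy, mul_add, Finset.sum_add_distrib,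
            mul_ite, mul_zero]
          rw [Finset.sum_ite_eq' Finset.univ i (fun l => M k l * ε)]
          simp
        have hεle : ε ≤ M.mulVec xs i := by
          have : M i j * xs j ≤ ∑ l, M i l * xs l :=
            Finset.single_le_sum (fun l _ => mul_nonneg (hM i l) (hxsC.1 l))
              (Finset.mem_univ j)
          simpa [Matrix.mulVec, dotProduct, hε] using this
        have hyC : C y := by
          constructor
          · intro k
            have : (0:ℝ) ≤ if k = i then ε else 0 := by
              split
              · exact le_of_lt hεpos
              · exact le_refl 0
            exact add_nonneg (hxsC.1 k) this
          · intro k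
            rw [hmv k]
            by_cases hk : k = i
            · subst hk
              have hyk : y k = ε := by simp [hy, hxsi]
              rw [hyk]
              have h2 : 0 ≤ M k k * ε := mul_nonneg (hM k k) (le_of_lt hεpos)
              linarith [hεle]
            · have hyk : y k = xs k := by simp [hy, hk]
              rw [hyk]
              have h2 : 0 ≤ M k i * ε := mul_nonneg (hM k i) (le_of_lt hεpos)
              linarith [hxsC.2 k]
        have hyi : 0 < y i := by
          simp [hy, hxsi, hεpos]
        exact hiZ (hZmem y hyC i hyi)
      · intro μ hμ
        by_contra habs
        push_neg at habs
        obtain ⟨u, hu0, ⟨i0, hi0⟩, hule⟩ := SimpleObstructionAux.key_reverse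
          (Matrix.of (fun i j : {x // x ∈ Zᶜ} => M i.1 j.1)) (fun i j => hM _ _)
          (Matrix.of fun i j : {x // x ∈ Zᶜ} => (M i.1 j.1 : ℂ)) (fun i j => rfl)
          μ hμ habs
        set ut : Fin n → ℝ := fun j => if h : j ∈ Zᶜ then u ⟨j, h⟩ else 0 with hut
        have hut0 : ∀ k, 0 ≤ ut k := by
          intro k
          rw [hut]
          dsimp only
          split
          · exact hu0 _
          · exact le_refl 0
        have hutC : C ut := by
          refine ⟨hut0, ?_⟩
          intro k
          by_cases hk : k ∈ Zᶜ
          · have h1 : ut k = u ⟨k, hk⟩ := dif_pos hk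
            have h2 : M.mulVec ut k = ∑ j ∈ Zᶜ, M k j * ut j := by
              symm
              apply Finset.sum_subset (Finset.subset_univ _)
              intro j _ hj
              have : ut j = 0 := dif_neg hj
              rw [this, mul_zero]
            have h3 : (∑ j ∈ Zᶜ, M k j * ut j) =
                (Matrix.of (fun i j : {x // x ∈ Zᶜ} => M i.1 j.1)).mulVec u ⟨k, hk⟩ := by
              rw [← Finset.sum_coe_sort Zᶜ (fun j => M k j * ut j)]
              simp only [Matrix.mulVec, dotProduct, Matrix.of_apply]
              apply Finset.sum_congr rfl
              intro j _
              rw [hut]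
              dsimp only
              rw [dif_pos j.2]
            rw [h1, h2, h3]
            exact hule ⟨k, hk⟩
          · have h1 : ut k = 0 := dif_neg hk
            rw [h1]
            simp only [Matrix.mulVec, dotProduct]
            exact Finset.sum_nonneg fun j _ => mul_nonneg (hM k j) (hut0 j)
        have hpos : 0 < ut i0.1 := by
          have h1 : ut i0.1 = u i0 := by
            rw [hut]; dsimp only; rw [dif_pos i0.2]
          rw [h1]
          exact lt_of_le_of_ne (hu0 i0) (Ne.symm hi0)
        exact (Finset.mem_compl.mp i0.2) (hZmem ut hutC i0.1 hpos)
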